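/- Let W : [0,∞) → [0,∞) be differentiable and satisfy W'(t) ≤ −λ W(t) + K W(t)^{3/2} for all t, with λ > 0, K > 0. If W(0) < (λ/(2K))², then W(t) ≤ e^{−λ t/2} W(0) for all t ≥ 0. (Local exponential stability from the cubic-perturbed Lyapunov inequality.) -/

import Mathlib

/-- Gronwall-type helper: if `deriv W ≤ -c * W` on `[0, a)`, then
`W a ≤ exp (-(c*a)) * W 0`. -/
lemma aux_gronwall (W : ℝ → ℝ) (c : ℝ) (hdiff : Differentiable ℝ W)
    (a : ℝ) (ha : 0 ≤ a)
    (h : ∀ x ∈ Set.Ico (0 : ℝ) a, deriv W x ≤ -c * W x) :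
    W a ≤ Real.exp (-(c * a)) * W 0 := by
  set g : ℝ → ℝ := fun t => W t * Real.exp (c * t) with hg
  have hgd : ∀ t : ℝ, HasDerivAt g
      (deriv W t * Real.exp (c * t) + W t * (Real.exp (c * t) * c)) t := by
    intro t
    have h := ((hdiff t).hasDerivAt).mul (((hasDerivAt_id t).const_mul c).exp)
    simp only [id_eq, mul_one] at h
    exact h
  have hanti : AntitoneOn g (Set.Icc 0 a) := by
    apply antitoneOn_of_deriv_nonpos (convex_Icc 0 a)
    · exact (Continuous.mul hdiff.continuous (Real.continuous_exp.comp
        (continuous_const.mul continuous_id))).continuousOn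
    · intro x hx
      exact ((hgd x).differentiableAt).differentiableWithinAt
    · intro x hx
      rw [interior_Icc] at hx
      rw [(hgd x).deriv]
      have hW : deriv W x ≤ -c * W x := h x ⟨le_of_lt hx.1, hx.2⟩
      have he : 0 < Real.exp (c * x) := Real.exp_pos _
      nlinarith
  have hmem0 : (0 : ℝ) ∈ Set.Icc (0 : ℝ) a := ⟨le_refl 0, ha⟩
  have hmema : a ∈ Set.Icc (0 : ℝ) a := ⟨ha, le_refl a⟩
  have hle : g a ≤ g 0 := hanti hmem0 hmema ha
  simp only [hg, mul_zero, Real.exp_zero, mul_one] at hle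
  have he : 0 < Real.exp (c * a) := Real.exp_pos _
  rw [Real.exp_neg]
  rw [inv_mul_eq_div, le_div_iff₀ he]
  exact hle

theorem local_exponential_stability_cubic_perturbed
    (W : ℝ → ℝ) (lam K : ℝ) (hlam : 0 < lam) (hK : 0 < K)
    (hdiff : Differentiable ℝ W)
    (hnonneg : ∀ t, 0 ≤ t → 0 ≤ W t)
    (hineq : ∀ t, 0 ≤ t → deriv W t ≤ -lam * W t + K * (W t * Real.sqrt (W t)))
    (hsmall : W 0 < (lam / (2 * K)) ^ 2) :
    ∀ t, 0 ≤ t → W t ≤ Real.exp (-lam * t / 2) * W 0 := by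
  set B : ℝ := (lam / (2 * K)) ^ 2 with hB
  have hr : 0 < lam / (2 * K) := by positivity
  -- key pointwise consequence: if W x < B (and 0 ≤ x) then deriv W x ≤ -(lam/2) * W x
  have key : ∀ x, 0 ≤ x → W x < B → deriv W x ≤ -(lam / 2) * W x := by
    intro x hx hWx
    have hWnn : 0 ≤ W x := hnonneg x hx
    have hsq : Real.sqrt (W x) < lam / (2 * K) := by
      have : Real.sqrt (W x) < Real.sqrt B := by
        exact Real.sqrt_lt_sqrt hWnn hWx
      rwa [hB, Real.sqrt_sq hr.le] at this
    have h1 : K * (W x * Real.sqrt (W x)) ≤ K * (W x * (lam / (2 * K))) := by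
      have : W x * Real.sqrt (W x) ≤ W x * (lam / (2 * K)) :=
        mul_le_mul_of_nonneg_left hsq.le hWnn
      exact mul_le_mul_of_nonneg_left this hK.le
    have h2 : K * (W x * (lam / (2 * K))) = (lam / 2) * W x := by
      field_simp
    have := hineq x hx
    nlinarith
  -- invariance: W t < B for all t ≥ 0
  have hinv : ∀ t, 0 ≤ t → W t < B := by
    by_contra hcon
    push_neg at hcon
    obtain ⟨t0, ht0, hBt0⟩ := hcon
    set S : Set ℝ := {t | 0 ≤ t ∧ B ≤ W t} with hS
    have hSne : S.Nonempty := ⟨t0, ht0, hBt0⟩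
    have hSbdd : BddBelow S := ⟨0, fun x hx => hx.1⟩
    have hSclosed : IsClosed S := by
      have : S = Set.Ici (0 : ℝ) ∩ W ⁻¹' Set.Ici B := by
        ext x; simp [hS, Set.mem_setOf_eq, Set.mem_Ici]
      rw [this]
      exact isClosed_Ici.inter (isClosed_Ici.preimage hdiff.continuous)
    have hsmem : sInf S ∈ S := hSclosed.csInf_mem hSne hSbdd
    set s := sInf S with hs
    have hs0 : 0 ≤ s := hsmem.1
    have hsB : B ≤ W s := hsmem.2
    have hlt : ∀ x ∈ Set.Ico (0 : ℝ) s, deriv W x ≤ -(lam / 2) * W x := by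
      intro x hx
      apply key x hx.1
      by_contra hxB
      push_neg at hxB
      have : s ≤ x := csInf_le hSbdd ⟨hx.1, hxB⟩
      exact absurd hx.2 (not_lt.mpr this)
    have hgr := aux_gronwall W (lam / 2) hdiff s hs0 hlt
    have hexp : Real.exp (-(lam / 2 * s)) ≤ 1 := by
      rw [Real.exp_le_one_iff]
      nlinarith
    have hW0 : 0 ≤ W 0 := hnonneg 0 le_rfl
    nlinarith
  intro t ht
  have hlt : ∀ x ∈ Set.Ico (0 : ℝ) t, deriv W x ≤ -(lam / 2) * W x :=
    fun x hx => key x hx.1 (hinv x hx.1)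
  have hgr := aux_gronwall W (lam / 2) hdiff t ht hlt
  have : -(lam / 2 * t) = -lam * t / 2 := by ring
  rwa [this] at hgr
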